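/- There exist real numbers b₍₀,₁₎, b₍₁,₀₎, b₍₋₁,₀₎, b₍₀,₋₁₎, c₁, c₋₁ such that for every n ≥ 5 the following holds on ℝ^(ℤ/nℤ × ℤ/nℤ): letting X = S⊗I and Y = I⊗S be the horizontal and vertical shift matrices, and letting B be the horizontal concatenation of the two matrices ∑_{(j,k) ∈ {(0,1),(1,0),(−1,0),(0,−1)}} b₍j,k₎·(I − Xʲ Yᵏ) and ∑_{j ∈ {1,−1}} c_j·(I − Xʲ), one has B Bᵀ = 6·I − (26/15)·(X + Xᵀ + Y + Yᵀ) + (1/10)·(XY + XYᵀ + XᵀY + XᵀYᵀ) + (2/15)·(X² + (Xᵀ)² + Y² + (Yᵀ)²). -/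

import Mathlib

open Matrix Kronecker

/-- The `n×n` cyclic shift matrix `S` over `ℤ/nℤ` (modelled as `Fin n`):
`S i j = 1` if `i = j + 1 (mod n)`, and `0` otherwise. -/
noncomputable def cycShift (n : ℕ) : Matrix (Fin n) (Fin n) ℝ :=
  Matrix.of fun i j => if (i : ℕ) = ((j : ℕ) + 1) % n then 1 else 0

lemma cycShift_apply_aux {n : ℕ} [NeZero n] (hn : 2 ≤ n) (i j : Fin n) :
    cycShift n i j = if i = j + 1 then 1 else 0 := by
  simp only [cycShift, Matrix.of_apply]
  congr 1
  simp only [eq_iff_iff]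
  rw [Fin.ext_iff, Fin.add_def]
  have h1 : ((1 : Fin n) : ℕ) = 1 := by
    rw [Fin.val_one' n]; exact Nat.mod_eq_of_lt (by omega)
  rw [h1]

lemma cycShift_mul_transpose_aux {n : ℕ} [NeZero n] (hn : 2 ≤ n) :
    cycShift n * (cycShift n)ᵀ = 1 := by
  ext i j
  simp only [Matrix.mul_apply, Matrix.transpose_apply, cycShift_apply_aux hn]
  have hc : ∀ k a : Fin n, (a = k + 1) = (k = a - 1) := by
    intro k a
    simp only [eq_iff_iff]
    rw [eq_comm, eq_sub_iff_add_eq, eq_comm]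
  simp only [hc]
  simp only [ite_mul, one_mul, zero_mul]
  rw [Finset.sum_ite_eq' Finset.univ (i - 1) (fun k => if k = j - 1 then (1:ℝ) else 0)]
  simp [Matrix.one_apply, sub_left_inj]

lemma transpose_mul_cycShift_aux {n : ℕ} [NeZero n] (hn : 2 ≤ n) :
    (cycShift n)ᵀ * cycShift n = 1 := by
  ext i j
  simp only [Matrix.mul_apply, Matrix.transpose_apply, cycShift_apply_aux hn]
  simp only [ite_mul, one_mul, zero_mul]
  rw [Finset.sum_ite_eq' Finset.univ (i + 1) (fun k => if k = j + 1 then (1:ℝ) else 0)]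
  simp [Matrix.one_apply, add_left_inj]

lemma keyRing {A : Type*} [CommRing A] [Algebra ℝ A]
    (x xi y yi u v a b d e f k26 k10 k215 : A)
    (hx : x * xi = 1) (hy : y * yi = 1)
    (hu : 15 * u ^ 2 = 23) (hv : 69 * v ^ 2 = 104)
    (ha : 2 * a = u + 1) (hb : 46 * b = 3 * u) (hd : 2 * d = u - 1)
    (he : 2 * e = v + 1) (hf : 2 * f = v - 1)
    (h26 : 15 * k26 = 26) (h10 : 10 * k10 = 1) (h215 : 15 * k215 = 2) :
    (a * (1 - y) + b * (1 - x) + b * (1 - xi) + d * (1 - yi)) *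
        (a * (1 - yi) + b * (1 - xi) + b * (1 - x) + d * (1 - y)) +
      (e * (1 - x) + f * (1 - xi)) * (e * (1 - xi) + f * (1 - x)) =
    6 - k26 * (x + xi + y + yi) + k10 * (x * y + x * yi + xi * y + xi * yi)
      + k215 * (x ^ 2 + xi ^ 2 + y ^ 2 + yi ^ 2) := by
  have H : (31740 : A) * ((a * (1 - y) + b * (1 - x) + b * (1 - xi) + d * (1 - yi)) *
        (a * (1 - yi) + b * (1 - xi) + b * (1 - x) + d * (1 - y)) +
      (e * (1 - x) + f * (1 - xi)) * (e * (1 - xi) + f * (1 - x))) =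
      (31740 : A) * (6 - k26 * (x + xi + y + yi)
        + k10 * (x * y + x * yi + xi * y + xi * yi)
        + k215 * (x ^ 2 + xi ^ 2 + y ^ 2 + yi ^ 2)) := by
    linear_combination
      (7935 + 31740*d + 63480*b + 15870*a + 7935*u - 7935*yi - 31740*yi*d - 31740*yi*b - 15870*yi*a - 7935*yi*u + 15870*yi^2*d - 7935*y - 31740*y*d - 31740*y*b - 15870*y*a - 7935*y*u + 7935*y*yi + 15870*y*yi*a + 7935*y*yi*u + 15870*y^2*d - 31740*xi*b + 15870*xi*yi*b + 15870*xi*y*b - 31740*x*b + 15870*x*yi*b + 15870*x*y*b) * ha +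
      (1380 + 2760*d + 2760*b + 1560*u - 690*yi - 1380*yi*d - 690*yi*u - 690*y - 1380*y*d - 690*y*u - 690*xi - 1380*xi*d - 2760*xi*b - 870*xi*u + 345*xi*yi + 690*xi*yi*d + 345*xi*yi*u + 345*xi*y + 690*xi*y*d + 345*xi*y*u + 690*xi^2*b + 45*xi^2*u - 690*x - 1380*x*d - 2760*x*b - 870*x*u + 345*x*yi + 690*x*yi*d + 345*x*yi*u + 345*x*y + 690*x*y*d + 345*x*y*u + 1380*x*xi*b + 90*x*xi*u + 690*x^2*b + 45*x^2*u) * hb +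
      (7935 + 15870*d + 27945*u - 7935*yi - 15870*yi*d - 25875*yi*u + 7935*yi^2 + 7935*yi^2*u - 7935*y - 15870*y*d - 25875*y*u - 7935*y*yi + 15870*y*yi*d + 7935*y*yi*u + 7935*y^2 + 7935*y^2*u - 2070*xi*u + 1035*xi*yi*u + 1035*xi*y*u - 2070*x*u + 1035*x*yi*u + 1035*x*y*u) * hd +
      (7935 + 31740*f + 15870*e + 7935*v - 7935*xi - 31740*xi*f - 15870*xi*e - 7935*xi*v + 15870*xi^2*f - 7935*x - 31740*x*f - 15870*x*e - 7935*x*v + 7935*x*xi + 15870*x*xi*e + 7935*x*xi*v + 15870*x^2*f) * he +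
      (7935 + 15870*f + 23805*v - 7935*xi - 15870*xi*f - 23805*xi*v + 7935*xi^2 + 7935*xi^2*v - 7935*x - 15870*x*f - 23805*x*v - 7935*x*xi + 15870*x*xi*f + 7935*x*xi*v + 7935*x^2 + 7935*x^2*v) * hf +
      (2116*yi + 2116*y + 2116*xi + 2116*x) * h26 +
      (- 3174*xi*yi - 3174*xi*y - 3174*x*yi - 3174*x*y) * h10 +
      (- 2116*yi^2 - 2116*y^2 - 2116*xi^2 - 2116*x^2) * h215 +
      (2704 - 2392*yi + 529*yi^2 - 2392*y + 1058*y*yi + 529*y^2 - 312*xi + 138*xi*yi + 138*xi*y + 9*xi^2 - 312*x + 138*x*yi + 138*x*y + 18*x*xi + 9*x^2) * hu +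
      (460 - 460*xi + 115*xi^2 - 460*x + 230*x*xi + 115*x^2) * hv +
      (40204 : A) * hx + (40204 : A) * hy
  have h1 : ∀ z w : A, (31740 : A) * z = (31740 : A) * w → z = w := by
    intro z w h
    have h2 : (31740 : ℝ) • z = (31740 : ℝ) • w := by
      rw [Algebra.smul_def, Algebra.smul_def, map_ofNat]; exact_mod_cast h
    have := congrArg (fun m => (31740 : ℝ)⁻¹ • m) h2
    simpa [smul_smul] using this
  exact h1 _ _ H

set_option maxHeartbeats 2000000 in
set_option synthInstance.maxHeartbeats 200000 in
/-- there exist weights `b₍₀,₁₎, b₍₁,₀₎, b₍₋₁,₀₎, b₍₀,₋₁₎, c₁, c₋₁`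
such that for every `n ≥ 5`, with `X = S⊗I`, `Y = I⊗S` on the discrete torus,
the horizontal concatenation `B` of `∑ b₍j,k₎(I − XʲYᵏ)` and `∑ c_j(I − Xʲ)`
(with `X⁻¹ = Xᵀ`, `Y⁻¹ = Yᵀ`) satisfies
`B Bᵀ = 6·I − (26/15)(X+Xᵀ+Y+Yᵀ) + (1/10)(XY+XYᵀ+XᵀY+XᵀYᵀ) + (2/15)(X²+(Xᵀ)²+Y²+(Yᵀ)²)`. -/
theorem stmt_16 :
    ∃ b01 b10 bm10 b0m1 c1 cm1 : ℝ, ∀ n : ℕ, 5 ≤ n →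
      ∀ X Y : Matrix (Fin n × Fin n) (Fin n × Fin n) ℝ,
        X = cycShift n ⊗ₖ (1 : Matrix (Fin n) (Fin n) ℝ) →
        Y = (1 : Matrix (Fin n) (Fin n) ℝ) ⊗ₖ cycShift n →
        ∀ B : Matrix (Fin n × Fin n) ((Fin n × Fin n) ⊕ (Fin n × Fin n)) ℝ,
          B = Matrix.fromCols
              (b01 • (1 - Y) + b10 • (1 - X) + bm10 • (1 - Xᵀ) + b0m1 • (1 - Yᵀ))
              (c1 • (1 - X) + cm1 • (1 - Xᵀ)) →
          B * Bᵀ = (6 : ℝ) • (1 : Matrix (Fin n × Fin n) (Fin n × Fin n) ℝ)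
              - (26 / 15 : ℝ) • (X + Xᵀ + Y + Yᵀ)
              + (1 / 10 : ℝ) • (X * Y + X * Yᵀ + Xᵀ * Y + Xᵀ * Yᵀ)
              + (2 / 15 : ℝ) • (X ^ 2 + (Xᵀ) ^ 2 + Y ^ 2 + (Yᵀ) ^ 2) := by
  set s0 : ℝ := Real.sqrt (23 / 15) with hs0def
  set t0 : ℝ := Real.sqrt (104 / 69) with ht0def
  have hs0 : s0 ^ 2 = 23 / 15 := Real.sq_sqrt (by norm_num)
  have ht0 : t0 ^ 2 = 104 / 69 := Real.sq_sqrt (by norm_num)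
  refine ⟨(s0 + 1) / 2, 3 * s0 / 46, 3 * s0 / 46, (s0 - 1) / 2,
    (t0 + 1) / 2, (t0 - 1) / 2, ?_⟩
  intro n hn X Y hX hY B hB
  haveI : NeZero n := ⟨by omega⟩
  have hn2 : 2 ≤ n := by omega
  set S : Matrix (Fin n) (Fin n) ℝ := cycShift n with hSdef
  have hSS : S * Sᵀ = 1 := cycShift_mul_transpose_aux hn2
  have hTS : Sᵀ * S = 1 := transpose_mul_cycShift_aux hn2
  -- transposes of X and Y
  have hXT : Xᵀ = Sᵀ ⊗ₖ (1 : Matrix (Fin n) (Fin n) ℝ) := by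
    rw [hX, ← Matrix.kroneckerMap_transpose, Matrix.transpose_one]
  have hYT : Yᵀ = (1 : Matrix (Fin n) (Fin n) ℝ) ⊗ₖ Sᵀ := by
    rw [hY, ← Matrix.kroneckerMap_transpose, Matrix.transpose_one]
  -- multiplication facts
  have hXXT : X * Xᵀ = 1 := by
    rw [hXT, hX, ← Matrix.mul_kronecker_mul, hSS, mul_one, Matrix.one_kronecker_one]
  have hYYT : Y * Yᵀ = 1 := by
    rw [hYT, hY, ← Matrix.mul_kronecker_mul, hSS, one_mul, Matrix.one_kronecker_one]
  -- pairwise commutation of the generators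
  have hcomm : ∀ a ∈ ({X, Xᵀ, Y, Yᵀ} : Set (Matrix (Fin n × Fin n) (Fin n × Fin n) ℝ)),
      ∀ b ∈ ({X, Xᵀ, Y, Yᵀ} : Set (Matrix (Fin n × Fin n) (Fin n × Fin n) ℝ)),
      a * b = b * a := by
    intro a ha b hb
    simp only [Set.mem_insert_iff, Set.mem_singleton_iff] at ha hb
    rcases ha with rfl | rfl | rfl | rfl <;> rcases hb with rfl | rfl | rfl | rfl <;>
      simp only [hX, hY, ← Matrix.kroneckerMap_transpose, Matrix.transpose_one,
        ← Matrix.mul_kronecker_mul, one_mul, mul_one, hSS, hTS]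
  letI : CommRing (Algebra.adjoin ℝ ({X, Xᵀ, Y, Yᵀ} :
      Set (Matrix (Fin n × Fin n) (Fin n × Fin n) ℝ))) :=
    Algebra.adjoinCommRingOfComm ℝ hcomm
  have hmemX : X ∈ Algebra.adjoin ℝ ({X, Xᵀ, Y, Yᵀ} : Set (Matrix (Fin n × Fin n) (Fin n × Fin n) ℝ)) := Algebra.subset_adjoin (by simp)
  have hmemXT : Xᵀ ∈ Algebra.adjoin ℝ ({X, Xᵀ, Y, Yᵀ} : Set (Matrix (Fin n × Fin n) (Fin n × Fin n) ℝ)) := Algebra.subset_adjoin (by simp)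
  have hmemY : Y ∈ Algebra.adjoin ℝ ({X, Xᵀ, Y, Yᵀ} : Set (Matrix (Fin n × Fin n) (Fin n × Fin n) ℝ)) := Algebra.subset_adjoin (by simp)
  have hmemYT : Yᵀ ∈ Algebra.adjoin ℝ ({X, Xᵀ, Y, Yᵀ} : Set (Matrix (Fin n × Fin n) (Fin n × Fin n) ℝ)) := Algebra.subset_adjoin (by simp)
  have hx : (⟨X, hmemX⟩ : (Algebra.adjoin ℝ ({X, Xᵀ, Y, Yᵀ} : Set (Matrix (Fin n × Fin n) (Fin n × Fin n) ℝ)))) * ⟨Xᵀ, hmemXT⟩ = 1 := Subtype.ext hXXT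
  have hy : (⟨Y, hmemY⟩ : (Algebra.adjoin ℝ ({X, Xᵀ, Y, Yᵀ} : Set (Matrix (Fin n × Fin n) (Fin n × Fin n) ℝ)))) * ⟨Yᵀ, hmemYT⟩ = 1 := Subtype.ext hYYT
  have hu : 15 * (algebraMap ℝ (Algebra.adjoin ℝ ({X, Xᵀ, Y, Yᵀ} : Set (Matrix (Fin n × Fin n) (Fin n × Fin n) ℝ))) s0) ^ 2 = 23 := by
    have h : (15 : ℝ) * s0 ^ 2 = 23 := by rw [hs0]; norm_num
    have := congrArg (algebraMap ℝ (Algebra.adjoin ℝ ({X, Xᵀ, Y, Yᵀ} : Set (Matrix (Fin n × Fin n) (Fin n × Fin n) ℝ)))) h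
    simpa only [_root_.map_mul, _root_.map_pow, _root_.map_ofNat] using this
  have hv : 69 * (algebraMap ℝ (Algebra.adjoin ℝ ({X, Xᵀ, Y, Yᵀ} : Set (Matrix (Fin n × Fin n) (Fin n × Fin n) ℝ))) t0) ^ 2 = 104 := by
    have h : (69 : ℝ) * t0 ^ 2 = 104 := by rw [ht0]; norm_num
    have := congrArg (algebraMap ℝ (Algebra.adjoin ℝ ({X, Xᵀ, Y, Yᵀ} : Set (Matrix (Fin n × Fin n) (Fin n × Fin n) ℝ)))) h
    simpa only [_root_.map_mul, _root_.map_pow, _root_.map_ofNat] using this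
  have ha : 2 * algebraMap ℝ (Algebra.adjoin ℝ ({X, Xᵀ, Y, Yᵀ} : Set (Matrix (Fin n × Fin n) (Fin n × Fin n) ℝ))) ((s0 + 1) / 2) = algebraMap ℝ (Algebra.adjoin ℝ ({X, Xᵀ, Y, Yᵀ} : Set (Matrix (Fin n × Fin n) (Fin n × Fin n) ℝ))) s0 + 1 := by
    have h : (2 : ℝ) * ((s0 + 1) / 2) = s0 + 1 := by ring
    have := congrArg (algebraMap ℝ (Algebra.adjoin ℝ ({X, Xᵀ, Y, Yᵀ} : Set (Matrix (Fin n × Fin n) (Fin n × Fin n) ℝ)))) h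
    simpa only [_root_.map_mul, _root_.map_add, _root_.map_one, _root_.map_ofNat] using this
  have hb : 46 * algebraMap ℝ (Algebra.adjoin ℝ ({X, Xᵀ, Y, Yᵀ} : Set (Matrix (Fin n × Fin n) (Fin n × Fin n) ℝ))) (3 * s0 / 46) = 3 * algebraMap ℝ (Algebra.adjoin ℝ ({X, Xᵀ, Y, Yᵀ} : Set (Matrix (Fin n × Fin n) (Fin n × Fin n) ℝ))) s0 := by
    have h : (46 : ℝ) * (3 * s0 / 46) = 3 * s0 := by ring
    have := congrArg (algebraMap ℝ (Algebra.adjoin ℝ ({X, Xᵀ, Y, Yᵀ} : Set (Matrix (Fin n × Fin n) (Fin n × Fin n) ℝ)))) h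
    simpa only [_root_.map_mul, _root_.map_ofNat] using this
  have hd : 2 * algebraMap ℝ (Algebra.adjoin ℝ ({X, Xᵀ, Y, Yᵀ} : Set (Matrix (Fin n × Fin n) (Fin n × Fin n) ℝ))) ((s0 - 1) / 2) = algebraMap ℝ (Algebra.adjoin ℝ ({X, Xᵀ, Y, Yᵀ} : Set (Matrix (Fin n × Fin n) (Fin n × Fin n) ℝ))) s0 - 1 := by
    have h : (2 : ℝ) * ((s0 - 1) / 2) = s0 - 1 := by ring
    have := congrArg (algebraMap ℝ (Algebra.adjoin ℝ ({X, Xᵀ, Y, Yᵀ} : Set (Matrix (Fin n × Fin n) (Fin n × Fin n) ℝ)))) h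
    simpa only [_root_.map_mul, _root_.map_sub, _root_.map_one, _root_.map_ofNat] using this
  have he : 2 * algebraMap ℝ (Algebra.adjoin ℝ ({X, Xᵀ, Y, Yᵀ} : Set (Matrix (Fin n × Fin n) (Fin n × Fin n) ℝ))) ((t0 + 1) / 2) = algebraMap ℝ (Algebra.adjoin ℝ ({X, Xᵀ, Y, Yᵀ} : Set (Matrix (Fin n × Fin n) (Fin n × Fin n) ℝ))) t0 + 1 := by
    have h : (2 : ℝ) * ((t0 + 1) / 2) = t0 + 1 := by ring
    have := congrArg (algebraMap ℝ (Algebra.adjoin ℝ ({X, Xᵀ, Y, Yᵀ} : Set (Matrix (Fin n × Fin n) (Fin n × Fin n) ℝ)))) h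
    simpa only [_root_.map_mul, _root_.map_add, _root_.map_one, _root_.map_ofNat] using this
  have hf : 2 * algebraMap ℝ (Algebra.adjoin ℝ ({X, Xᵀ, Y, Yᵀ} : Set (Matrix (Fin n × Fin n) (Fin n × Fin n) ℝ))) ((t0 - 1) / 2) = algebraMap ℝ (Algebra.adjoin ℝ ({X, Xᵀ, Y, Yᵀ} : Set (Matrix (Fin n × Fin n) (Fin n × Fin n) ℝ))) t0 - 1 := by
    have h : (2 : ℝ) * ((t0 - 1) / 2) = t0 - 1 := by ring
    have := congrArg (algebraMap ℝ (Algebra.adjoin ℝ ({X, Xᵀ, Y, Yᵀ} : Set (Matrix (Fin n × Fin n) (Fin n × Fin n) ℝ)))) h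
    simpa only [_root_.map_mul, _root_.map_sub, _root_.map_one, _root_.map_ofNat] using this
  have h26 : 15 * algebraMap ℝ (Algebra.adjoin ℝ ({X, Xᵀ, Y, Yᵀ} : Set (Matrix (Fin n × Fin n) (Fin n × Fin n) ℝ))) (26 / 15) = 26 := by
    have h : (15 : ℝ) * (26 / 15) = 26 := by norm_num
    have := congrArg (algebraMap ℝ (Algebra.adjoin ℝ ({X, Xᵀ, Y, Yᵀ} : Set (Matrix (Fin n × Fin n) (Fin n × Fin n) ℝ)))) h
    simpa only [_root_.map_mul, _root_.map_ofNat] using this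
  have h10 : 10 * algebraMap ℝ (Algebra.adjoin ℝ ({X, Xᵀ, Y, Yᵀ} : Set (Matrix (Fin n × Fin n) (Fin n × Fin n) ℝ))) (1 / 10) = 1 := by
    have h : (10 : ℝ) * (1 / 10) = 1 := by norm_num
    have := congrArg (algebraMap ℝ (Algebra.adjoin ℝ ({X, Xᵀ, Y, Yᵀ} : Set (Matrix (Fin n × Fin n) (Fin n × Fin n) ℝ)))) h
    simpa only [_root_.map_mul, _root_.map_one, _root_.map_ofNat] using this
  have h215 : 15 * algebraMap ℝ (Algebra.adjoin ℝ ({X, Xᵀ, Y, Yᵀ} : Set (Matrix (Fin n × Fin n) (Fin n × Fin n) ℝ))) (2 / 15) = 2 := by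
    have h : (15 : ℝ) * (2 / 15) = 2 := by norm_num
    have := congrArg (algebraMap ℝ (Algebra.adjoin ℝ ({X, Xᵀ, Y, Yᵀ} : Set (Matrix (Fin n × Fin n) (Fin n × Fin n) ℝ)))) h
    simpa only [_root_.map_mul, _root_.map_ofNat] using this
  have key := keyRing (⟨X, hmemX⟩ : (Algebra.adjoin ℝ ({X, Xᵀ, Y, Yᵀ} : Set (Matrix (Fin n × Fin n) (Fin n × Fin n) ℝ)))) ⟨Xᵀ, hmemXT⟩ ⟨Y, hmemY⟩ ⟨Yᵀ, hmemYT⟩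
    (algebraMap ℝ (Algebra.adjoin ℝ ({X, Xᵀ, Y, Yᵀ} : Set (Matrix (Fin n × Fin n) (Fin n × Fin n) ℝ))) s0) (algebraMap ℝ (Algebra.adjoin ℝ ({X, Xᵀ, Y, Yᵀ} : Set (Matrix (Fin n × Fin n) (Fin n × Fin n) ℝ))) t0) (algebraMap ℝ (Algebra.adjoin ℝ ({X, Xᵀ, Y, Yᵀ} : Set (Matrix (Fin n × Fin n) (Fin n × Fin n) ℝ))) ((s0 + 1) / 2))
    (algebraMap ℝ (Algebra.adjoin ℝ ({X, Xᵀ, Y, Yᵀ} : Set (Matrix (Fin n × Fin n) (Fin n × Fin n) ℝ))) (3 * s0 / 46)) (algebraMap ℝ (Algebra.adjoin ℝ ({X, Xᵀ, Y, Yᵀ} : Set (Matrix (Fin n × Fin n) (Fin n × Fin n) ℝ))) ((s0 - 1) / 2))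
    (algebraMap ℝ (Algebra.adjoin ℝ ({X, Xᵀ, Y, Yᵀ} : Set (Matrix (Fin n × Fin n) (Fin n × Fin n) ℝ))) ((t0 + 1) / 2)) (algebraMap ℝ (Algebra.adjoin ℝ ({X, Xᵀ, Y, Yᵀ} : Set (Matrix (Fin n × Fin n) (Fin n × Fin n) ℝ))) ((t0 - 1) / 2))
    (algebraMap ℝ (Algebra.adjoin ℝ ({X, Xᵀ, Y, Yᵀ} : Set (Matrix (Fin n × Fin n) (Fin n × Fin n) ℝ))) (26 / 15)) (algebraMap ℝ (Algebra.adjoin ℝ ({X, Xᵀ, Y, Yᵀ} : Set (Matrix (Fin n × Fin n) (Fin n × Fin n) ℝ))) (1 / 10)) (algebraMap ℝ (Algebra.adjoin ℝ ({X, Xᵀ, Y, Yᵀ} : Set (Matrix (Fin n × Fin n) (Fin n × Fin n) ℝ))) (2 / 15))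
    hx hy hu hv ha hb hd he hf h26 h10 h215
  -- push the identity down to matrices
  have key' := congrArg (Subtype.val : Algebra.adjoin ℝ ({X, Xᵀ, Y, Yᵀ} : Set (Matrix (Fin n × Fin n) (Fin n × Fin n) ℝ)) → Matrix (Fin n × Fin n) (Fin n × Fin n) ℝ) key
  simp only [Subalgebra.coe_mul, Subalgebra.coe_add, Subalgebra.coe_sub, Subalgebra.coe_one,
    Subalgebra.coe_pow, Subalgebra.coe_algebraMap] at key'
  -- reduce the goal to the coerced identity
  rw [hB, Matrix.transpose_fromCols, Matrix.fromCols_mul_fromRows]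
  simp only [Matrix.transpose_add, Matrix.transpose_smul, Matrix.transpose_sub,
    Matrix.transpose_one, Matrix.transpose_transpose]
  simp only [Algebra.smul_def] at key' ⊢
  have h6 : ((6 : Algebra.adjoin ℝ ({X, Xᵀ, Y, Yᵀ} :
      Set (Matrix (Fin n × Fin n) (Fin n × Fin n) ℝ))) :
      Matrix (Fin n × Fin n) (Fin n × Fin n) ℝ) = (6 : Matrix (Fin n × Fin n) (Fin n × Fin n) ℝ) := by
    norm_cast
  rw [h6] at key'
  simp only [Algebra.smul_def, map_ofNat, mul_one]
  convert key' using 2
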